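/- Let Π_A be an observable on ℂ^D with Tr(Π_A) > 0, set ρ_A := Π_A / Tr(Π_A) and ⟨Π_A⟩ := Tr(Π_A)/D, let w be a weight function, let λ ∈ [0,1], and let (f_k)_{k ∈ Fin D} be an orthonormal eigenbasis of Π_A (each f_k satisfies Π_A f_k = f_k or Π_A f_k = 0). Suppose the number of indices k with Π_A f_k = f_k and |∫_ℝ w(t) · ⟨f_k(t), Π_A f_k(t)⟩ dt − ⟨Π_A⟩| ≥ λ is at most n_f, where f_k(t) := exp(−itH) f_k. Then |∫_ℝ w(t) · Tr(ρ_A(t) Π_A) dt − ⟨Π_A⟩| ≤ λ + (n_f / Tr(Π_A)) · (1 − λ). -/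

import Mathlib

open MeasureTheory Filter
open scoped ComplexOrder

namespace QET

variable {D : ℕ}

/-- `exp(-itH)` for the Hamiltonian `H = Σ_n (E n) • P_n`, where `P_n` is the orthogonal
projection onto the `n`-th vector of the fixed orthonormal eigenbasis `e`.  All operators are
written as matrices in this eigenbasis, so `H` is diagonal and
`exp(-itH) = diag (exp (-i t E n))`. -/
noncomputable def U (E : Fin D → ℝ) (t : ℝ) : Matrix (Fin D) (Fin D) ℂ :=
  Matrix.diagonal fun n => Complex.exp (-(Complex.I) * t * (E n))

/-- Time evolution `X(t) = exp(-itH) · X · exp(itH)`. -/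
noncomputable def evolve (E : Fin D → ℝ) (t : ℝ) (X : Matrix (Fin D) (Fin D) ℂ) :
    Matrix (Fin D) (Fin D) ℂ :=
  U E t * X * U E (-t)

/-- A state: a positive semidefinite operator with unit trace. -/
def IsState (ρ : Matrix (Fin D) (Fin D) ℂ) : Prop :=
  ρ.PosSemidef ∧ ρ.trace = 1

/-- An observable: an orthogonal projection (Hermitian idempotent). -/
def IsObservable (P : Matrix (Fin D) (Fin D) ℂ) : Prop :=
  P.IsHermitian ∧ P * P = P

/-- Orthogonal projection `Π_S` onto the energy shell spanned by `{e n : n ∈ S}`. -/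
noncomputable def shellProj (S : Finset (Fin D)) : Matrix (Fin D) (Fin D) ℂ :=
  Matrix.diagonal fun n => if n ∈ S then 1 else 0

/-- A state is supported on the shell of `S`: `Π_S ρ Π_S = ρ`. -/
def SupportedOn (S : Finset (Fin D)) (ρ : Matrix (Fin D) (Fin D) ℂ) : Prop :=
  shellProj S * ρ * shellProj S = ρ

/-- Thermal value `⟨P⟩_S = Tr(P Π_S)/d` (a real number: trace of Hermitian products below). -/
noncomputable def thermVal (S : Finset (Fin D)) (P : Matrix (Fin D) (Fin D) ℂ) : ℝ :=
  (P * shellProj S).trace.re / S.card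

/-- Fourier transform `w̃(E) = ∫ w(t) exp(-iEt) dt` of a weight function. -/
noncomputable def fourier (w : ℝ → ℝ) (En : ℝ) : ℂ :=
  ∫ t : ℝ, (w t : ℂ) * Complex.exp (-(Complex.I) * En * t)

/-- A weight function: integrable, nonnegative, normalized to `∫ w = 1`. -/
structure IsWeight (w : ℝ → ℝ) : Prop where
  integrable : Integrable w
  nonneg : ∀ t, 0 ≤ w t
  normalized : (∫ t : ℝ, w t) = 1

/-- A completely positive weight: a weight function whose Fourier transform is a
nonnegative real number everywhere. -/
structure IsCPWeight (w : ℝ → ℝ) extends IsWeight w : Prop where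
  fourier_im : ∀ En : ℝ, (fourier w En).im = 0
  fourier_nonneg : ∀ En : ℝ, 0 ≤ (fourier w En).re

/-- The matrix element `⟨e n, (P - ⟨P⟩_S · 1) e m⟩ = ⟨e n, P e m⟩ - ⟨P⟩_S δ_{nm}`. -/
noncomputable def devEl (S : Finset (Fin D)) (P : Matrix (Fin D) (Fin D) ℂ)
    (n m : Fin D) : ℂ :=
  P n m - if n = m then (thermVal S P : ℂ) else 0

/-- Band variance `Σ_{n,m ∈ S, |E n - E m| < ΔE} |⟨e n, P e m⟩ - ⟨P⟩_S δ_{nm}|²`. -/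
noncomputable def bandVar (S : Finset (Fin D)) (E : Fin D → ℝ) (ΔE : ℝ)
    (P : Matrix (Fin D) (Fin D) ℂ) : ℝ :=
  ∑ n ∈ S, ∑ m ∈ S,
    if |E n - E m| < ΔE then ‖devEl S P n m‖ ^ 2 else 0

/-- Energy-band thermalization in the shell `S` with bandwidth `ΔE` and accuracy `ε`. -/
def EnergyBandTherm (S : Finset (Fin D)) (E : Fin D → ℝ) (ΔE ε : ℝ)
    (P : Matrix (Fin D) (Fin D) ℂ) : Prop :=
  (1 / (S.card : ℝ)) * bandVar S E ΔE P < ε ^ 2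

/-- Expectation value `⟨v, P v⟩` of an operator in a vector. -/
noncomputable def expVal (P : Matrix (Fin D) (Fin D) ℂ) (v : Fin D → ℂ) : ℂ :=
  dotProduct (star v) (P.mulVec v)


section Aux
open Matrix

variable {D : ℕ}

private lemma trace_mul_vecMulVec (A : Matrix (Fin D) (Fin D) ℂ) (u v : Fin D → ℂ) :
    (A * Matrix.vecMulVec u v).trace = v ⬝ᵥ (A.mulVec u) := by
  simp only [Matrix.trace, Matrix.diag, Matrix.mul_apply, Matrix.vecMulVec_apply,
    dotProduct, Matrix.mulVec, Finset.mul_sum]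
  exact Finset.sum_congr rfl fun i _ => Finset.sum_congr rfl fun j _ => by ring

private lemma mul_vecMulVec' (A : Matrix (Fin D) (Fin D) ℂ) (u v : Fin D → ℂ) :
    A * Matrix.vecMulVec u v = Matrix.vecMulVec (A.mulVec u) v := by
  ext i j
  simp only [Matrix.mul_apply, Matrix.vecMulVec_apply, Matrix.mulVec, dotProduct,
    Finset.sum_mul]
  exact Finset.sum_congr rfl fun m _ => by ring

private lemma vecMulVec_zero_left (v : Fin D → ℂ) :
    Matrix.vecMulVec (0 : Fin D → ℂ) v = 0 := by
  ext i j; simp [Matrix.vecMulVec_apply]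

private lemma completeness (f : Fin D → (Fin D → ℂ))
    (hon : ∀ k l, dotProduct (star (f k)) (f l) = if k = l then 1 else 0) :
    (∑ k, Matrix.vecMulVec (f k) (star (f k))) = 1 := by
  set F : Matrix (Fin D) (Fin D) ℂ := Matrix.of fun i k => f k i with hF
  have h1 : Fᴴ * F = 1 := by
    ext k l
    simpa [Matrix.mul_apply, Matrix.conjTranspose_apply, hF, dotProduct,
      Matrix.one_apply] using hon k l
  have h2 : F * Fᴴ = 1 := mul_eq_one_comm.mp h1
  calc (∑ k, Matrix.vecMulVec (f k) (star (f k))) = F * Fᴴ := by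
        ext i j
        simp [Matrix.sum_apply, Matrix.vecMulVec_apply, Matrix.mul_apply, hF,
          Matrix.conjTranspose_apply, mul_comm]
    _ = 1 := h2

private lemma U_mul_U (E : Fin D → ℝ) (s t : ℝ) : U E s * U E t = U E (s + t) := by
  simp only [U, Matrix.diagonal_mul_diagonal]
  exact congrArg Matrix.diagonal (funext fun n => by
    rw [← Complex.exp_add]; congr 1; push_cast; ring)

private lemma U_conjTranspose (E : Fin D → ℝ) (t : ℝ) : (U E t)ᴴ = U E (-t) := by
  simp only [U, Matrix.diagonal_conjTranspose]
  refine congrArg Matrix.diagonal (funext fun n => ?_)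
  rw [Pi.star_apply, RCLike.star_def, ← Complex.exp_conj]
  congr 1
  simp only [_root_.map_mul, map_neg, Complex.conj_I, Complex.conj_ofReal]
  push_cast; ring

private lemma U_unitary (E : Fin D → ℝ) (t : ℝ) : U E (-t) * U E t = 1 := by
  rw [U_mul_U]; simp [U, Matrix.diagonal_one]

private lemma dotProduct_star_self (u : Fin D → ℂ) :
    dotProduct (star u) u = ((∑ i, Complex.normSq (u i) : ℝ) : ℂ) := by
  simp only [dotProduct, Pi.star_apply, RCLike.star_def]
  push_cast
  exact Finset.sum_congr rfl fun i _ => by rw [mul_comm, Complex.mul_conj]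

private lemma expVal_eq_norm (P : Matrix (Fin D) (Fin D) ℂ) (hh : P.IsHermitian)
    (hi : P * P = P) (v : Fin D → ℂ) :
    expVal P v = dotProduct (star (P.mulVec v)) (P.mulVec v) := by
  rw [Matrix.star_mulVec, ← Matrix.dotProduct_mulVec, Matrix.mulVec_mulVec, hh.eq, hi, expVal]

private lemma expVal_bounds (P : Matrix (Fin D) (Fin D) ℂ) (hh : P.IsHermitian)
    (hi : P * P = P) (v : Fin D → ℂ)
    (hv : dotProduct (star v) v = 1) :
    (expVal P v).im = 0 ∧ 0 ≤ (expVal P v).re ∧ (expVal P v).re ≤ 1 := by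
  have hreal : expVal P v = ((∑ i, Complex.normSq (P.mulVec v i) : ℝ) : ℂ) := by
    rw [expVal_eq_norm P hh hi, dotProduct_star_self]
  have him : (expVal P v).im = 0 := by rw [hreal]; exact Complex.ofReal_im _
  have hre0 : 0 ≤ (expVal P v).re := by
    rw [hreal, Complex.ofReal_re]
    exact Finset.sum_nonneg fun i _ => Complex.normSq_nonneg _
  refine ⟨him, hre0, ?_⟩
  -- 1 - P is also a Hermitian projection
  set Q : Matrix (Fin D) (Fin D) ℂ := 1 - P with hQ
  have hQh : Q.IsHermitian := by
    unfold Matrix.IsHermitian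
    rw [hQ, Matrix.conjTranspose_sub, Matrix.conjTranspose_one, hh.eq]
  have hQi : Q * Q = Q := by
    rw [hQ, sub_mul, one_mul, mul_sub, mul_one, hi, sub_self, sub_zero]
  have hQreal : expVal Q v = ((∑ i, Complex.normSq (Q.mulVec v i) : ℝ) : ℂ) := by
    rw [expVal_eq_norm Q hQh hQi, dotProduct_star_self]
  have hQre0 : 0 ≤ (expVal Q v).re := by
    rw [hQreal, Complex.ofReal_re]
    exact Finset.sum_nonneg fun i _ => Complex.normSq_nonneg _
  have hsum : expVal Q v = 1 - expVal P v := by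
    rw [expVal, expVal, hQ, Matrix.sub_mulVec, Matrix.one_mulVec, dotProduct_sub, hv]
  rw [hsum, Complex.sub_re, Complex.one_re] at hQre0
  linarith

private lemma continuous_expVal (E : Fin D → ℝ) (P : Matrix (Fin D) (Fin D) ℂ)
    (v : Fin D → ℂ) :
    Continuous fun t : ℝ => expVal P ((U E t).mulVec v) := by
  have hv : ∀ t : ℝ, (U E t).mulVec v
      = fun n => Complex.exp (-(Complex.I) * t * (E n)) * v n := by
    intro t; funext n; simp [U, Matrix.mulVec_diagonal]
  have h : ∀ t : ℝ, expVal P ((U E t).mulVec v) =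
      ∑ n, ∑ m, star (Complex.exp (-(Complex.I) * t * (E n)) * v n) *
        (P n m * (Complex.exp (-(Complex.I) * t * (E m)) * v m)) := by
    intro t
    rw [expVal, hv t]
    simp only [dotProduct, Matrix.mulVec, Pi.star_apply, Finset.mul_sum]
  simp only [h]
  fun_prop

private lemma abs_of_im_zero (z : ℂ) (h : z.im = 0) : ‖z‖ = |z.re| := by
  rw [Complex.norm_def, Complex.normSq_apply, h, mul_zero, add_zero, ← sq,
    Real.sqrt_sq_eq_abs]

end Aux

/-- **Thermalization of almost all eigenbasis states of a bulky observable bounds the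
autocorrelator.**  Let `Π_A` be an observable with `Tr Π_A > 0`, `ρ_A := Π_A / Tr Π_A`,
`⟨Π_A⟩ := Tr Π_A / D`, `w` a weight function, `λ ∈ [0,1]`, and `(f_k)` an orthonormal
eigenbasis of `Π_A` (each `f_k` satisfies `Π_A f_k = f_k` or `Π_A f_k = 0`).  If the number
of `k` with `Π_A f_k = f_k` and `|∫ w(t) ⟨f_k(t), Π_A f_k(t)⟩ dt - ⟨Π_A⟩| ≥ λ` is at most
`n_f`, then `|∫ w(t) Tr(ρ_A(t) Π_A) dt - ⟨Π_A⟩| ≤ λ + (n_f / Tr Π_A)(1 - λ)`. -/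
theorem eigenbasis_thermalization_bounds_autocorrelator
    {D : ℕ} (hD : 0 < D) (E : Fin D → ℝ)
    (PiA : Matrix (Fin D) (Fin D) ℂ) (hPiA : IsObservable PiA)
    (htr : 0 < PiA.trace.re)
    (w : ℝ → ℝ) (hw : IsWeight w)
    (lam : ℝ) (hlam0 : 0 ≤ lam) (hlam1 : lam ≤ 1)
    (f : Fin D → (Fin D → ℂ))
    (hon : ∀ k l, dotProduct (star (f k)) (f l) = if k = l then 1 else 0)
    (heig : ∀ k, PiA.mulVec (f k) = f k ∨ PiA.mulVec (f k) = 0)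
    (nf : ℕ)
    (hcount : ((Finset.univ.filter fun k : Fin D =>
        PiA.mulVec (f k) = f k ∧
          lam ≤ ‖(∫ t : ℝ, (w t : ℂ) * expVal PiA ((U E t).mulVec (f k))) -
            ((PiA.trace.re / D : ℝ) : ℂ)‖).card) ≤ nf) :
    ‖(∫ t : ℝ, (w t : ℂ) *
          (evolve E t ((PiA.trace.re : ℂ)⁻¹ • PiA) * PiA).trace) -
        ((PiA.trace.re / D : ℝ) : ℂ)‖
      ≤ lam + (nf / PiA.trace.re) * (1 - lam) := by
  obtain ⟨hherm, hidem⟩ := hPiA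
  set χ : ℂ := ((PiA.trace.re / D : ℝ) : ℂ) with hχ
  set G : Finset (Fin D) := Finset.univ.filter (fun k => PiA.mulVec (f k) = f k) with hGdef
  set N : ℕ := G.card with hNdef
  -- decomposition of PiA
  have hdec : PiA = ∑ k ∈ G, Matrix.vecMulVec (f k) (star (f k)) := by
    calc PiA = PiA * ∑ k, Matrix.vecMulVec (f k) (star (f k)) := by
          rw [completeness f hon, mul_one]
      _ = ∑ k, Matrix.vecMulVec (PiA.mulVec (f k)) (star (f k)) := by
          rw [Finset.mul_sum]
          exact Finset.sum_congr rfl fun k _ => mul_vecMulVec' _ _ _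
      _ = ∑ k ∈ G, Matrix.vecMulVec (f k) (star (f k)) := by
          rw [hGdef, Finset.sum_filter]
          refine Finset.sum_congr rfl fun k _ => ?_
          by_cases hk : PiA.mulVec (f k) = f k
          · rw [if_pos hk, hk]
          · rw [if_neg hk]
            rcases heig k with h | h
            · exact absurd h hk
            · rw [h, vecMulVec_zero_left]
  have htrace_sum : ∀ M : Matrix (Fin D) (Fin D) ℂ,
      (M * PiA).trace = ∑ k ∈ G, dotProduct (star (f k)) (M.mulVec (f k)) := by
    intro M
    conv_lhs => rw [hdec]
    rw [Finset.mul_sum, Matrix.trace_sum]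
    exact Finset.sum_congr rfl fun k _ => trace_mul_vecMulVec _ _ _
  have htrN : PiA.trace = (N : ℂ) := by
    have h1 := htrace_sum 1
    rw [one_mul] at h1
    rw [h1]
    have : ∀ k ∈ G, dotProduct (star (f k))
        ((1 : Matrix (Fin D) (Fin D) ℂ).mulVec (f k)) = 1 := by
      intro k _
      rw [Matrix.one_mulVec, hon k k, if_pos rfl]
    rw [Finset.sum_congr rfl this, Finset.sum_const, nsmul_eq_mul, mul_one]
  have htrre : PiA.trace.re = (N : ℝ) := by rw [htrN]; simp
  have hN0 : 0 < (N : ℝ) := htrre ▸ htr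
  have hNne : ((N : ℝ) : ℂ) ≠ 0 := by
    simp only [ne_eq, Complex.ofReal_eq_zero]
    exact ne_of_gt hN0
  have hNleD : (N : ℝ) ≤ (D : ℝ) := by
    have : N ≤ D := by
      rw [hNdef, hGdef]
      simpa using Finset.card_filter_le Finset.univ (fun k => PiA.mulVec (f k) = f k)
    exact_mod_cast this
  -- pointwise trace formula
  have hpoint : ∀ t : ℝ, (evolve E t ((PiA.trace.re : ℂ)⁻¹ • PiA) * PiA).trace
      = (((N : ℝ) : ℂ))⁻¹ * ∑ k ∈ G, expVal PiA ((U E t).mulVec (f k)) := by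
    intro t
    have e1 : evolve E t ((PiA.trace.re : ℂ)⁻¹ • PiA) * PiA
        = (PiA.trace.re : ℂ)⁻¹ • ((U E t * PiA * U E (-t)) * PiA) := by
      simp only [evolve, Matrix.mul_smul, Matrix.smul_mul]
    rw [e1, Matrix.trace_smul, smul_eq_mul, htrre]
    congr 1
    have e2 : ((U E t * PiA * U E (-t)) * PiA).trace
        = ((U E (-t) * PiA * U E t) * PiA).trace := by
      calc ((U E t * PiA * U E (-t)) * PiA).trace
          = ((U E t * PiA) * (U E (-t) * PiA)).trace := by
            rw [mul_assoc (U E t * PiA) (U E (-t)) PiA]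
        _ = ((U E (-t) * PiA) * (U E t * PiA)).trace := Matrix.trace_mul_comm _ _
        _ = ((U E (-t) * PiA * U E t) * PiA).trace := by
            rw [mul_assoc (U E (-t) * PiA) (U E t) PiA]
    rw [e2, htrace_sum]
    refine Finset.sum_congr rfl fun k _ => ?_
    rw [expVal, Matrix.star_mulVec, U_conjTranspose, ← Matrix.dotProduct_mulVec]
    rw [Matrix.mulVec_mulVec, Matrix.mulVec_mulVec]
  -- unit norm of evolved eigenvectors
  have hunit : ∀ (k : Fin D) (t : ℝ),
      dotProduct (star ((U E t).mulVec (f k))) ((U E t).mulVec (f k)) = 1 := by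
    intro k t
    rw [Matrix.star_mulVec, U_conjTranspose, ← Matrix.dotProduct_mulVec,
      Matrix.mulVec_mulVec, U_unitary, Matrix.one_mulVec, hon k k, if_pos rfl]
  have hbnd : ∀ (k : Fin D) (t : ℝ),
      (expVal PiA ((U E t).mulVec (f k))).im = 0 ∧
      0 ≤ (expVal PiA ((U E t).mulVec (f k))).re ∧
      (expVal PiA ((U E t).mulVec (f k))).re ≤ 1 := fun k t =>
    expVal_bounds PiA hherm hidem _ (hunit k t)
  have habs1 : ∀ (k : Fin D) (t : ℝ),
      ‖expVal PiA ((U E t).mulVec (f k))‖ ≤ 1 := by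
    intro k t
    obtain ⟨h1, h2, h3⟩ := hbnd k t
    rw [abs_of_im_zero _ h1, abs_of_nonneg h2]
    exact h3
  -- integrability
  have hint : ∀ k : Fin D,
      Integrable (fun t => (w t : ℂ) * expVal PiA ((U E t).mulVec (f k))) := by
    intro k
    refine MeasureTheory.Integrable.mono' hw.integrable ?_ ?_
    · exact (Complex.continuous_ofReal.comp_aestronglyMeasurable
        hw.integrable.aestronglyMeasurable).mul
        (continuous_expVal E PiA (f k)).aestronglyMeasurable
    · refine Filter.Eventually.of_forall fun t => ?_
      rw [norm_mul, Complex.norm_real, Real.norm_eq_abs, abs_of_nonneg (hw.nonneg t)]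
      calc w t * ‖expVal PiA ((U E t).mulVec (f k))‖
          ≤ w t * 1 := by
            refine mul_le_mul_of_nonneg_left ?_ (hw.nonneg t)
            exact habs1 k t
        _ = w t := mul_one _
  set I : Fin D → ℂ := fun k => ∫ t : ℝ, (w t : ℂ) * expVal PiA ((U E t).mulVec (f k))
    with hIdef
  -- integral identity
  have hI : (∫ t : ℝ, (w t : ℂ) * (evolve E t ((PiA.trace.re : ℂ)⁻¹ • PiA) * PiA).trace)
      = (((N : ℝ) : ℂ))⁻¹ * ∑ k ∈ G, I k := by
    have e : ∀ t : ℝ, (w t : ℂ) * (evolve E t ((PiA.trace.re : ℂ)⁻¹ • PiA) * PiA).trace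
        = (((N : ℝ) : ℂ))⁻¹ * ∑ k ∈ G, (w t : ℂ) * expVal PiA ((U E t).mulVec (f k)) := by
      intro t
      simp only [hpoint t, Finset.mul_sum]
      exact Finset.sum_congr rfl fun k _ => by ring
    rw [MeasureTheory.integral_congr_ae (Filter.Eventually.of_forall e),
      MeasureTheory.integral_const_mul, MeasureTheory.integral_finset_sum G fun k _ => hint k]
  -- bounds on I k
  have hIbnd : ∀ k : Fin D, (I k).im = 0 ∧ 0 ≤ (I k).re ∧ (I k).re ≤ 1 := by
    intro k
    have hIk : I k = ∫ t : ℝ, (w t : ℂ) * expVal PiA ((U E t).mulVec (f k)) := rfl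
    have him : (I k).im = 0 := by
      rw [hIk, ← RCLike.im_to_complex, ← _root_.integral_im (hint k)]
      refine (MeasureTheory.integral_eq_zero_of_ae (Filter.Eventually.of_forall fun t => ?_))
      simp only [RCLike.im_to_complex, Complex.mul_im, Complex.ofReal_im, Complex.ofReal_re,
        (hbnd k t).1, zero_mul, mul_zero, add_zero, Pi.zero_apply]
    have hre : (I k).re = ∫ t : ℝ, w t * (expVal PiA ((U E t).mulVec (f k))).re := by
      rw [hIk, ← RCLike.re_to_complex, ← _root_.integral_re (hint k)]
      refine MeasureTheory.integral_congr_ae (Filter.Eventually.of_forall fun t => ?_)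
      simp only [RCLike.re_to_complex, Complex.mul_re, Complex.ofReal_re, Complex.ofReal_im,
        zero_mul, sub_zero]
    have hintre : Integrable (fun t => w t * (expVal PiA ((U E t).mulVec (f k))).re) := by
      have := (hint k).re
      refine this.congr (Filter.Eventually.of_forall fun t => ?_)
      simp only [RCLike.re_to_complex, Complex.mul_re, Complex.ofReal_re, Complex.ofReal_im,
        zero_mul, sub_zero]
    refine ⟨him, ?_, ?_⟩
    · rw [hre]
      exact MeasureTheory.integral_nonneg fun t =>
        mul_nonneg (hw.nonneg t) (hbnd k t).2.1
    · rw [hre, ← hw.normalized]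
      refine MeasureTheory.integral_mono hintre hw.integrable fun t => ?_
      calc w t * (expVal PiA ((U E t).mulVec (f k))).re
          ≤ w t * 1 := mul_le_mul_of_nonneg_left (hbnd k t).2.2 (hw.nonneg t)
        _ = w t := mul_one _
  -- χ is real with value in [0,1]
  have hχre : χ.re = (N : ℝ) / D := by rw [hχ, Complex.ofReal_re, htrre]
  have hχim : χ.im = 0 := Complex.ofReal_im _
  have hχ0 : 0 ≤ (N : ℝ) / D := div_nonneg (le_of_lt hN0) (Nat.cast_nonneg D)
  have hχ1 : (N : ℝ) / D ≤ 1 := by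
    rw [div_le_one (by exact_mod_cast hD)]
    exact hNleD
  -- each |I k - χ| ≤ 1
  have habsk : ∀ k : Fin D, ‖I k - χ‖ ≤ 1 := by
    intro k
    obtain ⟨h1, h2, h3⟩ := hIbnd k
    have him : (I k - χ).im = 0 := by rw [Complex.sub_im, h1, hχim, sub_zero]
    rw [abs_of_im_zero _ him, Complex.sub_re, hχre, abs_le]
    constructor <;> linarith
  -- counting
  set p : Fin D → Prop := fun k => lam ≤ ‖I k - χ‖ with hp
  have hBeq : G.filter p = Finset.univ.filter fun k : Fin D =>
      PiA.mulVec (f k) = f k ∧ lam ≤ ‖I k - χ‖ := by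
    rw [hGdef, Finset.filter_filter]
  have hble : ((G.filter p).card : ℝ) ≤ (nf : ℝ) := by
    rw [hBeq]
    exact_mod_cast hcount
  have hbleN : ((G.filter p).card : ℝ) + ((G.filter (fun k => ¬ p k)).card : ℝ) = (N : ℝ) := by
    rw [hNdef]
    exact_mod_cast congrArg (Nat.cast (R := ℝ))
      (Finset.card_filter_add_card_filter_not (s := G) (p := p))
  -- split the sum
  have hsum_le : ∑ k ∈ G, ‖I k - χ‖
      ≤ ((G.filter p).card : ℝ) + ((G.filter (fun k => ¬ p k)).card : ℝ) * lam := by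
    rw [← Finset.sum_filter_add_sum_filter_not G p (fun k => ‖I k - χ‖)]
    refine add_le_add ?_ ?_
    · calc ∑ k ∈ G.filter p, ‖I k - χ‖
          ≤ ∑ _k ∈ G.filter p, (1 : ℝ) :=
            Finset.sum_le_sum fun k _ => habsk k
        _ = ((G.filter p).card : ℝ) := by rw [Finset.sum_const, nsmul_eq_mul, mul_one]
    · calc ∑ k ∈ G.filter (fun k => ¬ p k), ‖I k - χ‖
          ≤ ∑ _k ∈ G.filter (fun k => ¬ p k), lam := by
            refine Finset.sum_le_sum fun k hk => ?_
            have := (Finset.mem_filter.mp hk).2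
            exact le_of_not_ge this
        _ = ((G.filter (fun k => ¬ p k)).card : ℝ) * lam := by
            rw [Finset.sum_const, nsmul_eq_mul]
  -- combine
  rw [hI]
  have hmain : (((N : ℝ) : ℂ))⁻¹ * (∑ k ∈ G, I k) - χ
      = (((N : ℝ) : ℂ))⁻¹ * ∑ k ∈ G, (I k - χ) := by
    rw [Finset.sum_sub_distrib, Finset.sum_const, nsmul_eq_mul, mul_sub]
    congr 1
    have hcast : ((G.card : ℂ)) = ((N : ℝ) : ℂ) := by rw [hNdef]; push_cast; ring
    rw [hcast, ← mul_assoc, inv_mul_cancel₀ hNne, one_mul]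
  rw [hmain, norm_mul, norm_inv, Complex.norm_real, Real.norm_eq_abs, abs_of_pos hN0]
  have habs_sum : ‖∑ k ∈ G, (I k - χ)‖ ≤ ∑ k ∈ G, ‖I k - χ‖ :=
    norm_sum_le _ _
  have hfinal : (N : ℝ)⁻¹ * (((G.filter p).card : ℝ)
      + ((G.filter (fun k => ¬ p k)).card : ℝ) * lam)
      ≤ lam + ((nf : ℝ) / PiA.trace.re) * (1 - lam) := by
    rw [htrre, inv_mul_eq_div, div_le_iff₀ hN0]
    have h1 : ((G.filter (fun k => ¬ p k)).card : ℝ) = (N : ℝ) - ((G.filter p).card : ℝ) := by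
      linarith
    rw [h1]
    have h2 : ((G.filter p).card : ℝ) * (1 - lam) ≤ (nf : ℝ) * (1 - lam) :=
      mul_le_mul_of_nonneg_right hble (by linarith)
    have h3 : (nf : ℝ) / (N : ℝ) * (1 - lam) * (N : ℝ) = (nf : ℝ) * (1 - lam) := by
      field_simp
    nlinarith [hN0]
  calc (N : ℝ)⁻¹ * ‖∑ k ∈ G, (I k - χ)‖
      ≤ (N : ℝ)⁻¹ * (((G.filter p).card : ℝ)
        + ((G.filter (fun k => ¬ p k)).card : ℝ) * lam) := by
        refine mul_le_mul_of_nonneg_left (le_trans habs_sum hsum_le) ?_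
        exact inv_nonneg.mpr (le_of_lt hN0)
    _ ≤ lam + ((nf : ℝ) / PiA.trace.re) * (1 - lam) := hfinal


end QET
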